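/- arXiv:1305.2465 — 3 statements merged into one kernel-verified Lean document; each statement's English description precedes it below -/
import Mathlib

section
/- Fix ε > 0. Every global solution of the stiff-spring (Duffing) system is periodic: if γ : ℝ → ℝ² satisfies γ₁'(t) = γ₂(t) and γ₂'(t) = −γ₁(t) − ε·γ₁(t)³ for all t ∈ ℝ, then there exists T > 0 such that γ(t + T) = γ(t) for all t ∈ ℝ. -/
open Set Real Metric

/-- Uniqueness of solutions for the Duffing system. -/
private lemma duffing_unique (ε : ℝ) (γ δ : ℝ → ℝ × ℝ)
    (hγ : ∀ t, HasDerivAt γ ((γ t).2, -(γ t).1 - ε * (γ t).1 ^ 3) t)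
    (hδ : ∀ t, HasDerivAt δ ((δ t).2, -(δ t).1 - ε * (δ t).1 ^ 3) t)
    (t₀ : ℝ) (heq : γ t₀ = δ t₀) : ∀ t, γ t = δ t := by
  intro t
  set a : ℝ := min t t₀ - 1 with ha
  set b : ℝ := max t t₀ + 1 with hb
  have hab : a < b := by
    have h1 : min t t₀ ≤ max t t₀ := le_trans (min_le_left _ _) (le_max_left _ _)
    simp only [ha, hb]; linarith
  have htmem : t ∈ Icc a b :=
    ⟨by simp only [ha]; have := min_le_left t t₀; linarith,
     by simp only [hb]; have := le_max_left t t₀; linarith⟩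
  have ht₀ : t₀ ∈ Ioo a b :=
    ⟨by simp only [ha]; have := min_le_right t t₀; linarith,
     by simp only [hb]; have := le_max_right t t₀; linarith⟩
  obtain ⟨R1, hR1⟩ := (isCompact_Icc (a := a) (b := b)).exists_bound_of_continuousOn
    (fun s _ => (hγ s).continuousAt.continuousWithinAt)
  obtain ⟨R2, hR2⟩ := (isCompact_Icc (a := a) (b := b)).exists_bound_of_continuousOn
    (fun s _ => (hδ s).continuousAt.continuousWithinAt)
  set R : ℝ := max R1 R2 with hRdef
  have hR0 : 0 ≤ R :=
    le_trans (norm_nonneg (γ a)) ((hR1 a ⟨le_rfl, hab.le⟩).trans (le_max_left _ _))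
  set v : ℝ → ℝ × ℝ → ℝ × ℝ := fun _ x => (x.2, -x.1 - ε * x.1 ^ 3) with hv_def
  set K : NNReal := Real.toNNReal (1 + |ε| * (3 * R ^ 2)) with hKdef
  have hKcoe : (K : ℝ) = 1 + |ε| * (3 * R ^ 2) := Real.coe_toNNReal _ (by positivity)
  have hv : ∀ s : ℝ, LipschitzOnWith K (v s) (closedBall (0 : ℝ × ℝ) R) := by
    intro s
    apply LipschitzOnWith.of_dist_le_mul
    intro x hx y hy
    rw [mem_closedBall_zero_iff] at hx hy
    have hx1 : |x.1| ≤ R := le_trans (norm_fst_le x) hx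
    have hy1 : |y.1| ≤ R := le_trans (norm_fst_le y) hy
    simp only [Prod.dist_eq, Real.dist_eq, hv_def, hKcoe]
    set M : ℝ := max |x.1 - y.1| |x.2 - y.2| with hM
    have hM1 : |x.1 - y.1| ≤ M := le_max_left _ _
    have hM2 : |x.2 - y.2| ≤ M := le_max_right _ _
    have hM0 : 0 ≤ M := le_trans (abs_nonneg _) hM1
    have hcoef : (1 : ℝ) ≤ 1 + |ε| * (3 * R ^ 2) := by nlinarith [abs_nonneg ε, sq_nonneg R]
    apply max_le
    · nlinarith [abs_nonneg ε, sq_nonneg R, mul_le_mul_of_nonneg_left hM2 (sub_nonneg.mpr hcoef)]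
    · have hcube : |x.1 ^ 3 - y.1 ^ 3| ≤ 3 * R ^ 2 * |x.1 - y.1| := by
        have h1 : x.1 ^ 3 - y.1 ^ 3 = (x.1 - y.1) * (x.1 ^ 2 + x.1 * y.1 + y.1 ^ 2) := by ring
        rw [h1, abs_mul]
        have hax := abs_le.mp hx1
        have hay := abs_le.mp hy1
        have h2 : |x.1 ^ 2 + x.1 * y.1 + y.1 ^ 2| ≤ 3 * R ^ 2 := by
          rw [abs_le]
          constructor <;> nlinarith [sq_nonneg (x.1 + y.1), sq_nonneg (x.1 - y.1)]
        calc |x.1 - y.1| * |x.1 ^ 2 + x.1 * y.1 + y.1 ^ 2|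
            ≤ |x.1 - y.1| * (3 * R ^ 2) := mul_le_mul_of_nonneg_left h2 (abs_nonneg _)
          _ = 3 * R ^ 2 * |x.1 - y.1| := by ring
      have htri : |(-x.1 - ε * x.1 ^ 3) - (-y.1 - ε * y.1 ^ 3)|
          ≤ |x.1 - y.1| + |ε| * |x.1 ^ 3 - y.1 ^ 3| := by
        have h3 : (-x.1 - ε * x.1 ^ 3) - (-y.1 - ε * y.1 ^ 3)
            = -((x.1 - y.1) + ε * (x.1 ^ 3 - y.1 ^ 3)) := by ring
        rw [h3, abs_neg]
        calc |(x.1 - y.1) + ε * (x.1 ^ 3 - y.1 ^ 3)|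
            ≤ |x.1 - y.1| + |ε * (x.1 ^ 3 - y.1 ^ 3)| := abs_add_le _ _
          _ = |x.1 - y.1| + |ε| * |x.1 ^ 3 - y.1 ^ 3| := by rw [abs_mul]
      have h4 : |ε| * |x.1 ^ 3 - y.1 ^ 3| ≤ |ε| * (3 * R ^ 2 * |x.1 - y.1|) :=
        mul_le_mul_of_nonneg_left hcube (abs_nonneg ε)
      calc |(-x.1 - ε * x.1 ^ 3) - (-y.1 - ε * y.1 ^ 3)|
          ≤ |x.1 - y.1| + |ε| * (3 * R ^ 2 * |x.1 - y.1|) := by linarith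
        _ = (1 + |ε| * (3 * R ^ 2)) * |x.1 - y.1| := by ring
        _ ≤ (1 + |ε| * (3 * R ^ 2)) * M := mul_le_mul_of_nonneg_left hM1 (by positivity)
  have hmemγ : ∀ s ∈ Ioo a b, γ s ∈ closedBall (0 : ℝ × ℝ) R := fun s hs =>
    mem_closedBall_zero_iff.mpr ((hR1 s (Ioo_subset_Icc_self hs)).trans (le_max_left _ _))
  have hmemδ : ∀ s ∈ Ioo a b, δ s ∈ closedBall (0 : ℝ × ℝ) R := fun s hs =>
    mem_closedBall_zero_iff.mpr ((hR2 s (Ioo_subset_Icc_self hs)).trans (le_max_right _ _))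
  exact ODE_solution_unique_of_mem_Icc (fun s _ => hv s) ht₀
    (fun s _ => (hγ s).continuousAt.continuousWithinAt)
    (fun s _ => hγ s) hmemγ
    (fun s _ => (hδ s).continuousAt.continuousWithinAt)
    (fun s _ => hδ s) hmemδ heq htmem

/-- The momentum component of a Duffing solution vanishes in every interval of length 4. -/
private lemma duffing_pzero (ε : ℝ) (hε : 0 < ε) (γ : ℝ → ℝ × ℝ)
    (h₁ : ∀ t : ℝ, HasDerivAt (fun s => (γ s).1) ((γ t).2) t)
    (h₂ : ∀ t : ℝ, HasDerivAt (fun s => (γ s).2) (-(γ t).1 - ε * (γ t).1 ^ 3) t)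
    (a : ℝ) : ∃ t ∈ Icc a (a + 4), (γ t).2 = 0 := by
  by_contra hcon
  push_neg at hcon
  set θ : ℝ → ℝ := fun s => Real.arctan ((γ s).1 / (γ s).2) with hθ
  have hderiv : ∀ s ∈ Icc a (a + 4),
      HasDerivAt θ (1 + ε * (γ s).1 ^ 4 / ((γ s).2 ^ 2 + (γ s).1 ^ 2)) s := by
    intro s hs
    have hp : (γ s).2 ≠ 0 := hcon s hs
    have hu : HasDerivAt (fun r => (γ r).1 / (γ r).2)
        (((γ s).2 * (γ s).2 - (γ s).1 * (-(γ s).1 - ε * (γ s).1 ^ 3)) / (γ s).2 ^ 2) s :=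
      (h₁ s).div (h₂ s) hp
    have hd := (Real.hasDerivAt_arctan ((γ s).1 / (γ s).2)).comp s hu
    have hB : (0 : ℝ) < (γ s).2 ^ 2 + (γ s).1 ^ 2 := by positivity
    have heq2 : 1 / (1 + ((γ s).1 / (γ s).2) ^ 2) *
        (((γ s).2 * (γ s).2 - (γ s).1 * (-(γ s).1 - ε * (γ s).1 ^ 3)) / (γ s).2 ^ 2)
        = 1 + ε * (γ s).1 ^ 4 / ((γ s).2 ^ 2 + (γ s).1 ^ 2) := by
      field_simp
      ring
    rw [heq2] at hd
    exact hd
  have hcont : ContinuousOn θ (Icc a (a + 4)) := fun s hs =>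
    (hderiv s hs).continuousAt.continuousWithinAt
  have hdiff : DifferentiableOn ℝ θ (interior (Icc a (a + 4))) := by
    rw [interior_Icc]
    exact fun s hs => ((hderiv s (Ioo_subset_Icc_self hs)).differentiableAt).differentiableWithinAt
  have hge : ∀ s ∈ interior (Icc a (a + 4)), (1 : ℝ) ≤ deriv θ s := by
    rw [interior_Icc]
    intro s hs
    rw [(hderiv s (Ioo_subset_Icc_self hs)).deriv]
    have hB : (0 : ℝ) < (γ s).2 ^ 2 + (γ s).1 ^ 2 := by
      have hp : (γ s).2 ≠ 0 := hcon s (Ioo_subset_Icc_self hs)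
      positivity
    have : (0 : ℝ) ≤ ε * (γ s).1 ^ 4 / ((γ s).2 ^ 2 + (γ s).1 ^ 2) := by positivity
    linarith
  have hMVT := (convex_Icc a (a + 4)).mul_sub_le_image_sub_of_le_deriv hcont hdiff hge
    a ⟨le_rfl, by linarith⟩ (a + 4) ⟨by linarith, le_rfl⟩ (by linarith)
  have h1 : θ (a + 4) < π / 2 := Real.arctan_lt_pi_div_two _
  have h2 : -(π / 2) < θ a := Real.neg_pi_div_two_lt_arctan _
  have hπ : π < 3.15 := Real.pi_lt_d2
  linarith

/-- Reflection of a Duffing solution is a Duffing solution. -/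
private lemma duffing_reflect (ε : ℝ) (γ : ℝ → ℝ × ℝ)
    (h₁ : ∀ t : ℝ, HasDerivAt (fun s => (γ s).1) ((γ t).2) t)
    (h₂ : ∀ t : ℝ, HasDerivAt (fun s => (γ s).2) (-(γ t).1 - ε * (γ t).1 ^ 3) t)
    (c t : ℝ) :
    HasDerivAt (fun s => ((γ (c - s)).1, -(γ (c - s)).2))
      (-(γ (c - t)).2, -(γ (c - t)).1 - ε * (γ (c - t)).1 ^ 3) t := by
  have haff : HasDerivAt (fun s : ℝ => c - s) (-1) t := (hasDerivAt_id t).const_sub c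
  have hq := (h₁ (c - t)).comp t haff
  have hp := (h₂ (c - t)).comp t haff
  have hpair := hq.prodMk hp.neg
  convert hpair using 1
  · rfl
  refine Prod.ext ?_ ?_ <;> simp <;> try ring

/-- Every global solution of the stiff-spring (Duffing) system
`q' = p`, `p' = −q − ε q³` with `ε > 0` is periodic. -/
theorem stiff_spring_solutions_periodic (ε : ℝ) (hε : 0 < ε)
    (γ : ℝ → ℝ × ℝ)
    (h₁ : ∀ t : ℝ, HasDerivAt (fun s => (γ s).1) ((γ t).2) t)
    (h₂ : ∀ t : ℝ, HasDerivAt (fun s => (γ s).2) (-(γ t).1 - ε * (γ t).1 ^ 3) t) :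
    ∃ T : ℝ, 0 < T ∧ ∀ t : ℝ, γ (t + T) = γ t := by
  have hγ : ∀ t, HasDerivAt γ ((γ t).2, -(γ t).1 - ε * (γ t).1 ^ 3) t := by
    intro t
    have hpair := (h₁ t).prodMk (h₂ t)
    have hfun : (fun s => ((γ s).1, (γ s).2)) = γ := funext fun s => Prod.mk.eta
    rwa [hfun] at hpair
  obtain ⟨t1, ht1mem, ht1⟩ := duffing_pzero ε hε γ h₁ h₂ 0
  obtain ⟨t2, ht2mem, ht2⟩ := duffing_pzero ε hε γ h₁ h₂ (t1 + 1)
  have hlt : t1 < t2 := lt_of_lt_of_le (by linarith) ht2mem.1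
  -- reflected solutions
  have key : ∀ c : ℝ, (γ c).2 = 0 → ∀ t, γ t = ((γ (2 * c - t)).1, -(γ (2 * c - t)).2) := by
    intro c hc
    have hδ : ∀ t, HasDerivAt (fun s => ((γ (2 * c - s)).1, -(γ (2 * c - s)).2))
        ((-(γ (2 * c - t)).2), -(γ (2 * c - t)).1 - ε * (γ (2 * c - t)).1 ^ 3) t :=
      fun t => duffing_reflect ε γ h₁ h₂ (2 * c) t
    have heqc : γ c = ((γ (2 * c - c)).1, -(γ (2 * c - c)).2) := by
      have harg : 2 * c - c = c := by ring
      rw [harg, hc, neg_zero, ← hc]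
    exact duffing_unique ε γ _ hγ (fun t => hδ t) c heqc
  have e1 := key t1 ht1
  have e2 := key t2 ht2
  refine ⟨2 * (t2 - t1), by linarith, fun t => ?_⟩
  have harg : 2 * t2 - (t + 2 * (t2 - t1)) = 2 * t1 - t := by ring
  calc γ (t + 2 * (t2 - t1))
      = ((γ (2 * t2 - (t + 2 * (t2 - t1)))).1, -(γ (2 * t2 - (t + 2 * (t2 - t1)))).2) := e2 _
    _ = ((γ (2 * t1 - t)).1, -(γ (2 * t1 - t)).2) := by rw [harg]
    _ = γ t := (e1 t).symm
end

section
/- The ℝ-action on the plane generated by the vector field X = sin x ∂x + cos x ∂y is free: if γ : ℝ → ℝ² satisfies γ'(t) = (sin γ₁(t), cos γ₁(t)) for all t ∈ ℝ, and γ(T) = γ(0) for some T ∈ ℝ, then T = 0. -/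
/-- The `ℝ`-action on the plane generated by the vector field
`X = sin x ∂x + cos x ∂y` is free: if `γ` is an integral curve of `X`
and `γ T = γ 0`, then `T = 0`. -/
theorem flow_sin_cos_free
    (γ : ℝ → ℝ × ℝ)
    (hγ : ∀ t : ℝ, HasDerivAt γ (Real.sin (γ t).1, Real.cos (γ t).1) t)
    (T : ℝ) (hT : γ T = γ 0) :
    T = 0 := by
  by_contra hne
  set x : ℝ → ℝ := fun t => (γ t).1 with hxdef
  set y : ℝ → ℝ := fun t => (γ t).2 with hydef
  have hx : ∀ t, HasDerivAt x (Real.sin (x t)) t := fun t => (hγ t).fst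
  have hy : ∀ t, HasDerivAt y (Real.cos (x t)) t := fun t => (hγ t).snd
  set a := min T 0 with ha
  set b := max T 0 with hb
  have hab : a < b := by
    rcases lt_or_gt_of_ne hne with h | h
    · simp [ha, hb, min_eq_left h.le, max_eq_right h.le, h]
    · simp [ha, hb, min_eq_right h.le, max_eq_left h.le, h]
  have hgab : γ a = γ b := by
    rcases le_total T 0 with h | h
    · simp [ha, hb, min_eq_left h, max_eq_right h, hT]
    · simp [ha, hb, min_eq_right h, max_eq_left h, hT]
  -- u := cos ∘ x is antitone
  set u : ℝ → ℝ := fun t => Real.cos (x t) with hudef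
  have hu : ∀ t, HasDerivAt u (-Real.sin (x t) * Real.sin (x t)) t := by
    intro t
    have := (Real.hasDerivAt_cos (x t)).comp t (hx t)
    exact this
  have hanti : Antitone u := by
    apply antitone_of_deriv_nonpos
    · exact fun t => (hu t).differentiableAt
    · intro t
      rw [(hu t).deriv]
      nlinarith [sq_nonneg (Real.sin (x t))]
  have huab : u a = u b := by simp [hudef, hxdef, hgab]
  have hconst : ∀ t ∈ Set.Icc a b, u t = u a := by
    intro t ht
    have h1 : u t ≤ u a := hanti ht.1
    have h2 : u b ≤ u t := hanti ht.2
    linarith [huab]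
  -- MVT on y gives a point where cos (x t) = 0
  have hyab : y a = y b := by simp [hydef, hgab]
  obtain ⟨c, hc, hderiv⟩ := exists_deriv_eq_slope y hab
    (fun t _ => (hy t).continuousAt.continuousWithinAt)
    (fun t _ => (hy t).differentiableAt.differentiableWithinAt)
  have hcos0 : Real.cos (x c) = 0 := by
    have := (hy c).deriv
    rw [this] at hderiv
    rw [hderiv, hyab]
    simp
  -- u is locally constant at c, so sin (x c) = 0
  have hmem : Set.Ioo a b ∈ nhds c := isOpen_Ioo.mem_nhds hc
  have heq : u =ᶠ[nhds c] fun _ => u a :=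
    Filter.eventuallyEq_of_mem hmem fun t ht => hconst t (Set.Ioo_subset_Icc_self ht)
  have hderivu : deriv u c = 0 := by
    rw [heq.deriv_eq]; exact deriv_const c (u a)
  have hsin0 : Real.sin (x c) = 0 := by
    have := (hu c).deriv
    rw [hderivu] at this
    nlinarith
  have := Real.sin_sq_add_cos_sq (x c)
  rw [hsin0, hcos0] at this
  norm_num at this
end

section
/- Let f : ℝ² → ℝ be continuous, 2π-periodic in each variable (f(x + 2π, y) = f(x, y) and f(x, y + 2π) = f(x, y) for all (x,y)), and invariant under the flow of the vector field X = sin x ∂x + cos x ∂y, in the sense that for every curve γ : ℝ → ℝ² with γ'(t) = (sin γ₁(t), cos γ₁(t)) for all t, the function t ↦ f(γ(t)) is constant. Then f(0,0) = f(π,0). (Hence an invariant function defined on the two exceptional circles of the induced torus flow, taking distinct values on them, does not extend to an invariant function on the whole torus.) -/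
open Real Filter Topology

noncomputable def myGamma : ℝ → ℝ × ℝ :=
  fun t => (2 * arctan (exp t), - Real.log (Real.cosh t))

lemma myGamma_deriv (t : ℝ) :
    HasDerivAt myGamma (Real.sin (myGamma t).1, Real.cos (myGamma t).1) t := by
  have hx : HasDerivAt (fun t : ℝ => 2 * arctan (exp t))
      (Real.sin (2 * arctan (exp t))) t := by
    have h1 : HasDerivAt (fun t : ℝ => arctan (exp t))
        (1 / (1 + exp t ^ 2) * exp t) t :=
      (Real.hasDerivAt_arctan (exp t)).comp t (Real.hasDerivAt_exp t)
    have h2 := h1.const_mul 2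
    refine h2.congr_deriv ?_
    rw [Real.sin_two_mul, Real.sin_arctan, Real.cos_arctan]
    have hs : Real.sqrt (1 + exp t ^ 2) ^ 2 = 1 + exp t ^ 2 :=
      Real.sq_sqrt (by positivity)
    have hs0 : Real.sqrt (1 + exp t ^ 2) ≠ 0 := by positivity
    field_simp
    exact hs
  have hy : HasDerivAt (fun t : ℝ => - Real.log (Real.cosh t))
      (Real.cos (2 * arctan (exp t))) t := by
    have h1 : HasDerivAt (fun t : ℝ => Real.log (Real.cosh t))
        (Real.sinh t / Real.cosh t) t :=
      (Real.hasDerivAt_cosh t).log (Real.cosh_pos t).ne'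
    have h2 := h1.neg
    refine h2.congr_deriv ?_
    rw [Real.cos_two_mul, Real.cos_arctan]
    have hs : Real.sqrt (1 + exp t ^ 2) ^ 2 = 1 + exp t ^ 2 :=
      Real.sq_sqrt (by positivity)
    have hs0 : Real.sqrt (1 + exp t ^ 2) ≠ 0 := by positivity
    have hc : Real.cosh t = (exp t + exp (-t)) / 2 := Real.cosh_eq t
    have hsh : Real.sinh t = (exp t - exp (-t)) / 2 := Real.sinh_eq t
    have hen : exp (-t) = (exp t)⁻¹ := Real.exp_neg t
    have het : exp t ≠ 0 := Real.exp_ne_zero t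
    have hc0 : Real.cosh t ≠ 0 := (Real.cosh_pos t).ne'
    rw [hc, hsh, hen] at *
    field_simp
    nlinarith [hs, Real.exp_pos t]
  exact hx.prodMk hy

/-- Let `f : ℝ² → ℝ` be continuous, `2π`-periodic in each variable, and invariant
under the flow of the vector field `X = sin x ∂x + cos x ∂y` (that is, `f` is constant
along every integral curve of `X`).  Then `f (0, 0) = f (π, 0)`. -/
theorem invariant_function_equal_on_exceptional_circles
    (f : ℝ × ℝ → ℝ) (hf : Continuous f)
    (hperx : ∀ x y : ℝ, f (x + 2 * Real.pi, y) = f (x, y))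
    (hpery : ∀ x y : ℝ, f (x, y + 2 * Real.pi) = f (x, y))
    (hinv : ∀ γ : ℝ → ℝ × ℝ,
      (∀ t : ℝ, HasDerivAt γ (Real.sin (γ t).1, Real.cos (γ t).1) t) →
      ∀ s t : ℝ, f (γ s) = f (γ t)) :
    f (0, 0) = f (Real.pi, 0) := by
  -- periodicity in y, iterated
  have hpern : ∀ (n : ℕ) (x y : ℝ), f (x, y + 2 * Real.pi * n) = f (x, y) := by
    intro n
    induction n with
    | zero => simp
    | succ k ih =>
      intro x y
      have : y + 2 * Real.pi * (k + 1 : ℕ) = (y + 2 * Real.pi * k) + 2 * Real.pi := by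
        push_cast; ring
      rw [this, hpery, ih]
  -- the curve
  have hconst := hinv myGamma myGamma_deriv
  -- times hitting y = -2πn
  set T : ℕ → ℝ := fun n =>
    Real.log (exp (2 * Real.pi * n) + Real.sqrt (exp (2 * Real.pi * n) ^ 2 - 1)) with hT
  have hcn : ∀ n : ℕ, (1 : ℝ) ≤ exp (2 * Real.pi * n) := fun n =>
    Real.one_le_exp (by positivity)
  have hcosh : ∀ n : ℕ, Real.cosh (T n) = exp (2 * Real.pi * n) := by
    intro n
    set c := exp (2 * Real.pi * n) with hc
    have h1 : (1:ℝ) ≤ c := hcn n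
    have hs0 : 0 ≤ Real.sqrt (c ^ 2 - 1) := Real.sqrt_nonneg _
    have hsq : Real.sqrt (c ^ 2 - 1) ^ 2 = c ^ 2 - 1 :=
      Real.sq_sqrt (by nlinarith)
    have ha : (0:ℝ) < c + Real.sqrt (c ^ 2 - 1) := by nlinarith
    have hexpT : exp (T n) = c + Real.sqrt (c ^ 2 - 1) := Real.exp_log ha
    have hexpnT : exp (-(T n)) = c - Real.sqrt (c ^ 2 - 1) := by
      rw [Real.exp_neg, hexpT]
      rw [inv_eq_iff_eq_inv, eq_comm, inv_eq_iff_eq_inv, eq_comm]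
      · field_simp
        nlinarith [hsq]
    rw [Real.cosh_eq, hexpT, hexpnT]; ring
  have hTn : ∀ n : ℕ, 2 * Real.pi * n ≤ T n := by
    intro n
    have := Real.log_le_log (Real.exp_pos _) (by nlinarith [Real.sqrt_nonneg (exp (2 * Real.pi * n) ^ 2 - 1)] :
      exp (2 * Real.pi * n) ≤ exp (2 * Real.pi * n) + Real.sqrt (exp (2 * Real.pi * n) ^ 2 - 1))
    rwa [Real.log_exp] at this
  have hTtop : Tendsto T atTop atTop := by
    apply tendsto_atTop_mono hTn
    exact Tendsto.const_mul_atTop (by positivity) tendsto_natCast_atTop_atTop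
  -- y-coordinate values
  have hyT : ∀ n : ℕ, (myGamma (T n)).2 = -(2 * Real.pi * n) := by
    intro n
    simp only [myGamma, hcosh n, Real.log_exp]
  have hyTn : ∀ n : ℕ, (myGamma (-(T n))).2 = -(2 * Real.pi * n) := by
    intro n
    simp only [myGamma, Real.cosh_neg, hcosh n, Real.log_exp]
  -- folded values
  have key : ∀ n : ℕ, f ((myGamma (T n)).1, 0) = f (myGamma 0) := by
    intro n
    have := hpern n (myGamma (T n)).1 (-(2 * Real.pi * n))
    have h0 : (-(2 * Real.pi * n) + 2 * Real.pi * n : ℝ) = 0 := by ring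
    rw [h0] at this
    rw [this, ← hyT n]
    exact hconst (T n) 0
  have key' : ∀ n : ℕ, f ((myGamma (-(T n))).1, 0) = f (myGamma 0) := by
    intro n
    have := hpern n (myGamma (-(T n))).1 (-(2 * Real.pi * n))
    have h0 : (-(2 * Real.pi * n) + 2 * Real.pi * n : ℝ) = 0 := by ring
    rw [h0] at this
    rw [this, ← hyTn n]
    exact hconst (-(T n)) 0
  -- limits of x-coordinates
  have hx1 : Tendsto (fun n => (myGamma (T n)).1) atTop (𝓝 Real.pi) := by
    have h1 : Tendsto (fun n => arctan (exp (T n))) atTop (𝓝 (Real.pi / 2)) :=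
      (Real.tendsto_arctan_atTop.mono_right nhdsWithin_le_nhds).comp
        (Real.tendsto_exp_atTop.comp hTtop)
    have h2 := h1.const_mul 2
    have hpi : 2 * (Real.pi / 2) = Real.pi := by ring
    rw [hpi] at h2
    simpa [myGamma] using h2
  have hx0 : Tendsto (fun n => (myGamma (-(T n))).1) atTop (𝓝 0) := by
    have he : Tendsto (fun n => exp (-(T n))) atTop (𝓝 0) :=
      Real.tendsto_exp_atBot.comp (tendsto_neg_atTop_atBot.comp hTtop)
    have h1 : Tendsto (fun n => arctan (exp (-(T n)))) atTop (𝓝 (arctan 0)) :=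
      (Real.continuous_arctan.tendsto 0).comp he
    rw [Real.arctan_zero] at h1
    have := h1.const_mul 2
    simpa [myGamma] using this
  -- pass to the limit
  have hfpi : Tendsto (fun n => f ((myGamma (T n)).1, 0)) atTop (𝓝 (f (Real.pi, 0))) :=
    (hf.tendsto _).comp (hx1.prodMk_nhds tendsto_const_nhds)
  have hf0 : Tendsto (fun n => f ((myGamma (-(T n))).1, 0)) atTop (𝓝 (f (0, 0))) :=
    (hf.tendsto _).comp (hx0.prodMk_nhds tendsto_const_nhds)
  have e1 : f (Real.pi, 0) = f (myGamma 0) :=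
    tendsto_nhds_unique hfpi (by simpa [key] using (tendsto_const_nhds : Tendsto (fun _ : ℕ => f (myGamma 0)) atTop _))
  have e2 : f (0, 0) = f (myGamma 0) :=
    tendsto_nhds_unique hf0 (by simpa [key'] using (tendsto_const_nhds : Tendsto (fun _ : ℕ => f (myGamma 0)) atTop _))
  rw [e1, e2]
end
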